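/- Let τ be phase-type with representation (α, T) on n phases, t = -T·1, and let J be the underlying terminating Markov jump process. Let (α*, T*) be the standard reversal. Then for all phases i, j and all s ≥ 0, the identity α_i (e^{Ts})_{ij} t_j = α*_j (e^{T*s})_{ji} t*_i holds, expressing that the probability of starting in i, being in j at time s, and terminating from j with density, equals the corresponding quantity for the reversed chain started in j and terminating from i. -/

import Mathlib

open Matrix

/-- Time-reversal identity for the terminating phase process: for all phases
`i, j` and times `s ≥ 0`, `α_i (e^{Ts})_{ij} t_j = α*_j (e^{T*s})_{ji} t*_i`. -/
theorem phase_reversal_identity {n : ℕ} (T : Matrix (Fin n) (Fin n) ℝ)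
    (hT : IsUnit T)
    (hoff : ∀ i j, i ≠ j → 0 ≤ T i j)
    (hrow : ∀ i, ∑ j, T i j ≤ 0)
    (α : Fin n → ℝ) (hα : ∀ i, 0 ≤ α i) (hα1 : ∑ i, α i = 1)
    (t : Fin n → ℝ) (ht : t = fun i => -(∑ j, T i j))
    (ν : Fin n → ℝ) (hν : ν = -(α ᵥ* T⁻¹)) (hνpos : ∀ i, 0 < ν i)
    (αstar : Fin n → ℝ) (hαstar : αstar = t ᵥ* Matrix.diagonal ν)
    (Tstar : Matrix (Fin n) (Fin n) ℝ)
    (hTstar : Tstar = (Matrix.diagonal ν)⁻¹ * Tᵀ * Matrix.diagonal ν)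
    (tstar : Fin n → ℝ) (htstar : tstar = (Matrix.diagonal ν)⁻¹ *ᵥ α) :
    ∀ (i j : Fin n) (s : ℝ), 0 ≤ s →
      α i * (NormedSpace.exp (s • T)) i j * t j =
        αstar j * (NormedSpace.exp (s • Tstar)) j i * tstar i := by
  intro i j s _
  have hdet : IsUnit (Matrix.diagonal ν) := by
    rw [Matrix.isUnit_iff_isUnit_det, Matrix.det_diagonal]
    exact isUnit_iff_ne_zero.mpr (Finset.prod_pos (fun k _ => hνpos k)).ne'
  have hsT : s • Tstar = (Matrix.diagonal ν)⁻¹ * (s • Tᵀ) * Matrix.diagonal ν := by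
    rw [hTstar]
    rw [Matrix.mul_smul, Matrix.smul_mul]
  have hexp : NormedSpace.exp (s • Tstar)
      = (Matrix.diagonal ν)⁻¹ * NormedSpace.exp (s • Tᵀ) * Matrix.diagonal ν := by
    rw [hsT, Matrix.exp_conj' _ _ hdet]
  have hTt : s • Tᵀ = (s • T)ᵀ := by simp [Matrix.transpose_smul]
  have hinv : (Matrix.diagonal ν)⁻¹ = Matrix.diagonal (fun k => (ν k)⁻¹) := by
    apply Matrix.inv_eq_right_inv
    rw [Matrix.diagonal_mul_diagonal]
    convert Matrix.diagonal_one with k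
    exact mul_inv_cancel₀ (hνpos k).ne'
  have hentry : (NormedSpace.exp (s • Tstar)) j i
      = (ν j)⁻¹ * (NormedSpace.exp (s • T)) i j * ν i := by
    rw [hexp, hTt, Matrix.exp_transpose, hinv, Matrix.mul_diagonal,
      Matrix.diagonal_mul, Matrix.transpose_apply]
  have hαs : αstar j = t j * ν j := by
    rw [hαstar, Matrix.vecMul_diagonal]
  have hts : tstar i = (ν i)⁻¹ * α i := by
    rw [htstar, hinv, Matrix.mulVec_diagonal]
  rw [hentry, hαs, hts]
  have h1 : ν j ≠ 0 := (hνpos j).ne'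
  have h2 : ν i ≠ 0 := (hνpos i).ne'
  field_simp
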